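/- Let P₀,…,Pₙ ∈ ℝ[X] be polynomials of degree at most n with coefficient matrix A = (a_{i,j}) (where Pⱼ(X) = Σᵢ a_{i,j} Xⁱ). Then for any x ∈ ℝ, det( (P_j^{(i)}(x))_{0≤i,j≤n} ) = det(A) · ∏_{i=0}^n i!. -/

import Mathlib

open Polynomial

/-- for polynomials P₀,…,Pₙ of degree ≤ n with coefficient matrix
A = (a_{i,j}), a_{i,j} = coeff i of Pⱼ, the determinant of the matrix of
derivatives (P_j^{(i)}(x)) equals det A · ∏_{i=0}^n i!, for every x. -/
theorem stmt_6 (n : ℕ) (P : Fin (n + 1) → Polynomial ℝ)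
    (hdeg : ∀ j, (P j).natDegree ≤ n) (x : ℝ) :
    Matrix.det (Matrix.of fun i j : Fin (n + 1) =>
        (Polynomial.derivative^[(i : ℕ)] (P j)).eval x) =
      Matrix.det (Matrix.of fun i j : Fin (n + 1) => (P j).coeff (i : ℕ)) *
        ∏ i ∈ Finset.range (n + 1), (Nat.factorial i : ℝ) := by
  set B : Matrix (Fin (n + 1)) (Fin (n + 1)) ℝ :=
    Matrix.of fun i k : Fin (n + 1) =>
      (Polynomial.derivative^[(i : ℕ)] ((X : ℝ[X]) ^ (k : ℕ))).eval x with hB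
  set A : Matrix (Fin (n + 1)) (Fin (n + 1)) ℝ :=
    Matrix.of fun i j : Fin (n + 1) => (P j).coeff (i : ℕ) with hA
  have key : (Matrix.of fun i j : Fin (n + 1) =>
      (Polynomial.derivative^[(i : ℕ)] (P j)).eval x) = B * A := by
    ext i j
    rw [Matrix.mul_apply]
    have hPj : P j = ∑ k ∈ Finset.range (n + 1), C ((P j).coeff k) * X ^ k := by
      conv_lhs => rw [(P j).as_sum_range' (n + 1) (Nat.lt_succ_of_le (hdeg j))]
      simp [Polynomial.C_mul_X_pow_eq_monomial]
    simp only [Matrix.of_apply]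
    conv_lhs => rw [hPj]
    rw [Polynomial.iterate_derivative_sum, Polynomial.eval_finset_sum,
      ← Fin.sum_univ_eq_sum_range
        (fun k => (Polynomial.derivative^[(i : ℕ)] (C ((P j).coeff k) * X ^ k)).eval x)]
    refine Finset.sum_congr rfl fun k _ => ?_
    rw [Polynomial.iterate_derivative_C_mul, Polynomial.eval_mul, Polynomial.eval_C]
    simp only [hB, hA, Matrix.of_apply]
    ring
  rw [key, Matrix.det_mul, mul_comm (B.det)]
  congr 1
  have hupper : ∀ i j : Fin (n + 1), j < i → B i j = 0 := by
    intro i j hij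
    simp only [hB, Matrix.of_apply, Polynomial.iterate_derivative_X_pow_eq_smul]
    rw [Nat.descFactorial_eq_zero_iff_lt.2 hij]
    simp
  rw [Matrix.det_of_upperTriangular hupper, ← Fin.prod_univ_eq_prod_range
    (fun i => (Nat.factorial i : ℝ))]
  refine Finset.prod_congr rfl fun i _ => ?_
  simp [hB, Polynomial.iterate_derivative_X_pow_eq_smul, Nat.descFactorial_self]
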